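/- Let X be a compact metric space and f : X → X continuous. If f has the M_α-shadowing property for every α ∈ (0,1), then f has the mean ergodic shadowing property. -/
import Mathlib

open Filter Metric

open scoped Classical in
noncomputable def upperDens (A : Set ℕ) : ℝ :=
  Filter.limsup (fun n => (((Finset.range n).filter (· ∈ A)).card : ℝ) / n) Filter.atTop

open scoped Classical in
noncomputable def lowerDens (A : Set ℕ) : ℝ :=
  Filter.liminf (fun n => (((Finset.range n).filter (· ∈ A)).card : ℝ) / n) Filter.atTop

open scoped Classical in
def DensityZero (A : Set ℕ) : Prop :=
  Filter.Tendsto (fun n => (((Finset.range n).filter (· ∈ A)).card : ℝ) / n)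
    Filter.atTop (nhds 0)

noncomputable def cesaro (a : ℕ → ℝ) (n : ℕ) : ℝ := (∑ i ∈ Finset.range n, a i) / n

variable {X : Type*} [MetricSpace X]

def ErgodicPO (f : X → X) (δ : ℝ) (x : ℕ → X) : Prop :=
  DensityZero {j | δ ≤ dist (f (x j)) (x (j + 1))}

def AvgPO (f : X → X) (δ : ℝ) (x : ℕ → X) : Prop :=
  ∃ N : ℕ, 0 < N ∧ ∀ n ≥ N, ∀ k : ℕ,
    (∑ j ∈ Finset.range n, dist (f (x (j + k))) (x (j + k + 1))) / n < δ

def WeakAsympAvgPO (f : X → X) (δ : ℝ) (x : ℕ → X) : Prop :=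
  Filter.limsup (cesaro (fun j => dist (f (x j)) (x (j + 1)))) Filter.atTop < δ

def AsympAvgPO (f : X → X) (x : ℕ → X) : Prop :=
  Filter.Tendsto (cesaro (fun j => dist (f (x j)) (x (j + 1)))) Filter.atTop (nhds 0)

def ShadowAvg (f : X → X) (ε : ℝ) (z : X) (x : ℕ → X) : Prop :=
  Filter.limsup (cesaro (fun j => dist (f^[j] z) (x j))) Filter.atTop < ε

def MeanErgodicShadowing (f : X → X) : Prop :=
  ∀ ε > (0:ℝ), ∃ δ > (0:ℝ), ∀ x : ℕ → X, ErgodicPO f δ x → ∃ z, ShadowAvg f ε z x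

def AvgShadowing (f : X → X) : Prop :=
  ∀ ε > (0:ℝ), ∃ δ > (0:ℝ), ∀ x : ℕ → X, AvgPO f δ x → ∃ z, ShadowAvg f ε z x

def WeakAsympAvgShadowing (f : X → X) : Prop :=
  ∀ ε > (0:ℝ), ∀ x : ℕ → X, AsympAvgPO f x → ∃ z, ShadowAvg f ε z x

def AlmostAsympAvgShadowing (f : X → X) : Prop :=
  ∀ ε > (0:ℝ), ∃ δ > (0:ℝ), ∀ x : ℕ → X, WeakAsympAvgPO f δ x → ∃ z, ShadowAvg f ε z x

def AsympAvgShadowing (f : X → X) : Prop :=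
  ∀ x : ℕ → X, AsympAvgPO f x →
    ∃ z, Filter.Tendsto (cesaro (fun j => dist (f^[j] z) (x j))) Filter.atTop (nhds 0)

def MalphaShadowing (f : X → X) (α : ℝ) : Prop :=
  ∀ ε > (0:ℝ), ∃ δ > (0:ℝ), ∀ x : ℕ → X, ErgodicPO f δ x →
    ∃ z, α < lowerDens {j | dist (f^[j] z) (x j) < ε}

open scoped Classical in
/-- Auxiliary: the counting function appearing in `lowerDens`. -/
noncomputable def kcardAux (A : Set ℕ) (n : ℕ) : ℕ :=
  ((Finset.range n).filter (· ∈ A)).card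

lemma kcardAux_eq (A : Set ℕ) [DecidablePred (· ∈ A)] (n : ℕ) :
    kcardAux A n = ((Finset.range n).filter (· ∈ A)).card := by
  unfold kcardAux
  congr!

lemma lowerDens_eq_liminf_kcardAux (A : Set ℕ) :
    lowerDens A = Filter.liminf (fun n => ((kcardAux A n : ℝ)) / n) Filter.atTop := rfl

/-- Main analytic lemma: if the set where `a` is small has lower density `> αv`,
and `a` is bounded by `Dv`, then the Cesàro limsup is small. -/
lemma limsup_cesaro_lt {a : ℕ → ℝ} {ε2 Dv αv εv : ℝ} (k : ℕ → ℕ)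
    (hε2 : 0 ≤ ε2) (hDv : 0 ≤ Dv) (ha0 : ∀ j, 0 ≤ a j)
    (hkn : ∀ n, k n ≤ n)
    (hsum : ∀ n, ∑ j ∈ Finset.range n, a j ≤ (k n : ℝ) * ε2 + ((n : ℝ) - (k n : ℝ)) * Dv)
    (hb : ε2 + Dv * (1 - αv) < εv)
    (hz : αv < Filter.liminf (fun n => ((k n : ℝ)) / n) Filter.atTop) :
    Filter.limsup (cesaro a) Filter.atTop < εv := by
  have hc1 : ∀ n, ((k n : ℝ)) / n ≤ 1 := by
    intro n
    rcases Nat.eq_zero_or_pos n with hn | hn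
    · simp [hn]
    · rw [div_le_one (by exact_mod_cast hn)]
      exact_mod_cast hkn n
  have hbdd : Filter.IsBoundedUnder (· ≤ ·) Filter.atTop (fun n => ((k n : ℝ)) / n) :=
    ⟨1, Filter.eventually_map.mpr (Filter.Eventually.of_forall hc1)⟩
  have hlb : Filter.IsBoundedUnder (· ≥ ·) Filter.atTop (fun n => ((k n : ℝ)) / n) :=
    ⟨0, Filter.eventually_map.mpr (Filter.Eventually.of_forall fun n =>
      div_nonneg (Nat.cast_nonneg _) (Nat.cast_nonneg _))⟩
  have hev : ∀ᶠ n in Filter.atTop, αv < ((k n : ℝ)) / n :=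
    Filter.eventually_lt_of_lt_liminf hz (hu := hlb)
  have hmain : ∀ᶠ n in Filter.atTop, cesaro a n ≤ ε2 + Dv * (1 - αv) := by
    filter_upwards [hev, Filter.eventually_ge_atTop 1] with n hn hn1
    have hn0 : (0:ℝ) < n := by exact_mod_cast hn1
    have hkln : (k n : ℝ) ≤ n := by exact_mod_cast hkn n
    have hαn : αv * n < (k n : ℝ) := (lt_div_iff₀ hn0).mp hn
    rw [cesaro, div_le_iff₀ hn0]
    calc ∑ j ∈ Finset.range n, a j ≤ (k n : ℝ) * ε2 + ((n : ℝ) - (k n : ℝ)) * Dv := hsum n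
      _ ≤ (ε2 + Dv * (1 - αv)) * n := by
          nlinarith [mul_nonneg hε2 (sub_nonneg.mpr hkln),
            mul_nonneg hDv (le_of_lt (sub_pos.mpr hαn))]
  have hcob : Filter.IsCoboundedUnder (· ≤ ·) Filter.atTop (cesaro a) := by
    have hb0 : Filter.IsBoundedUnder (· ≥ ·) Filter.atTop (cesaro a) :=
      ⟨0, Filter.eventually_map.mpr (Filter.Eventually.of_forall (fun n => by
        have : 0 ≤ ∑ j ∈ Finset.range n, a j := Finset.sum_nonneg fun j _ => ha0 j
        exact div_nonneg this (Nat.cast_nonneg n)))⟩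
    exact hb0.isCoboundedUnder_le
  exact lt_of_le_of_lt (Filter.limsup_le_of_le hcob hmain) hb

theorem stmt11 {X : Type*} [MetricSpace X] [CompactSpace X] (f : X → X)
    (hf : Continuous f) (h : ∀ α ∈ Set.Ioo (0:ℝ) 1, MalphaShadowing f α) :
    MeanErgodicShadowing f := by
  classical
  intro ε hε
  obtain ⟨C, hC⟩ := Metric.isBounded_iff.mp (isCompact_univ (X := X)).isBounded
  set D : ℝ := max C 0 with hDdef
  have hD0 : (0:ℝ) ≤ D := le_max_right _ _
  have hdist : ∀ p q : X, dist p q ≤ D := fun p q =>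
    le_trans (hC (Set.mem_univ p) (Set.mem_univ q)) (le_max_left _ _)
  have hD1 : (0:ℝ) < D + 1 := by linarith
  set α : ℝ := max (1/2) (1 - ε / (2 * (D + 1))) with hαdef
  have hα0 : (0:ℝ) < α := lt_of_lt_of_le (by norm_num) (le_max_left _ _)
  have hα1 : α < 1 := by
    apply max_lt (by norm_num)
    have : 0 < ε / (2 * (D + 1)) := by positivity
    linarith
  obtain ⟨δ, hδ, hsh⟩ := h α ⟨hα0, hα1⟩ (ε/2) (by linarith)
  refine ⟨δ, hδ, fun x hx => ?_⟩
  obtain ⟨z, hz⟩ := hsh x hx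
  refine ⟨z, ?_⟩
  have key : ε/2 + D * (1 - α) < ε := by
    have h5 : 1 - ε / (2 * (D + 1)) ≤ α := hαdef ▸ le_max_right _ _
    have h2 : 1 - α ≤ ε / (2 * (D + 1)) := by linarith
    have h3 : D * (1 - α) ≤ D * (ε / (2 * (D + 1))) := mul_le_mul_of_nonneg_left h2 hD0
    have h4 : D * (ε / (2 * (D + 1))) < ε/2 := by
      rw [← mul_div_assoc, div_lt_div_iff₀ (by linarith : (0:ℝ) < 2*(D+1)) two_pos]
      nlinarith
    linarith
  -- set up the application of the analytic lemma
  set a : ℕ → ℝ := fun j => dist (f^[j] z) (x j) with ha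
  set A : Set ℕ := {j | dist (f^[j] z) (x j) < ε/2} with hA
  have hzk : α < Filter.liminf (fun n => ((kcardAux A n : ℝ)) / n) Filter.atTop := by
    rw [← lowerDens_eq_liminf_kcardAux]
    exact hz
  have hkn : ∀ n, kcardAux A n ≤ n := by
    intro n
    rw [kcardAux_eq]
    exact (Finset.card_filter_le _ _).trans (le_of_eq (Finset.card_range n))
  have hsum : ∀ n, ∑ j ∈ Finset.range n, a j ≤
      (kcardAux A n : ℝ) * (ε/2) + ((n : ℝ) - (kcardAux A n : ℝ)) * D := by
    intro n
    rw [kcardAux_eq]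
    have hsplit := Finset.sum_filter_add_sum_filter_not (Finset.range n) (· ∈ A) a
    have h1 : ∑ j ∈ (Finset.range n).filter (· ∈ A), a j ≤
        (((Finset.range n).filter (· ∈ A)).card : ℝ) * (ε/2) := by
      have := Finset.sum_le_card_nsmul ((Finset.range n).filter (· ∈ A)) a (ε/2)
        (fun j hj => le_of_lt ((Finset.mem_filter.mp hj).2))
      simpa [nsmul_eq_mul] using this
    have h2 : ∑ j ∈ (Finset.range n).filter (fun j => ¬ j ∈ A), a j ≤
        ((((Finset.range n).filter (fun j => ¬ j ∈ A)).card : ℝ)) * D := by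
      have := Finset.sum_le_card_nsmul ((Finset.range n).filter (fun j => ¬ j ∈ A)) a D
        (fun j _ => hdist _ _)
      simpa [nsmul_eq_mul] using this
    have hcards : (((Finset.range n).filter (· ∈ A)).card : ℝ) +
        (((Finset.range n).filter (fun j => ¬ j ∈ A)).card : ℝ) = n := by
      have := Finset.card_filter_add_card_filter_not
        (s := Finset.range n) (p := (· ∈ A))
      rw [Finset.card_range] at this
      exact_mod_cast this
    have hm : ((((Finset.range n).filter (fun j => ¬ j ∈ A)).card : ℝ)) =
        (n : ℝ) - (((Finset.range n).filter (· ∈ A)).card : ℝ) := by linarith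
    rw [hm] at h2
    linarith
  exact limsup_cesaro_lt (kcardAux A) (by linarith) hD0 (fun j => dist_nonneg) hkn hsum key hzk
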